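/- arXiv:1606.06371 — 4 statements merged into one kernel-verified Lean document; each statement's English description precedes it below -/
import Mathlib

section
/- Let n ≥ 1 and p ≥ 1 be natural numbers with x_k = π(2k−1)/(2n). Then (1/n)·∑_{k=1}^{n} cos(p·x_k) = 0 if p is not a multiple of 2n, and equals (−1)^l if p = 2ln for a positive integer l. -/
open Finset

lemma cos_nat_mul_pi' (j : ℕ) : Real.cos (j * Real.pi) = (-1 : ℝ) ^ j := by
  have := Real.cos_nat_mul_pi_sub 0 j
  simpa using this

lemma sum_cos_key (θ : ℝ) (n : ℕ) :
    2 * Real.sin θ * ∑ k ∈ Finset.Icc 1 n, Real.cos ((2 * (k : ℝ) - 1) * θ)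
      = Real.sin (2 * n * θ) := by
  induction n with
  | zero => simp
  | succ m ih =>
    rw [Finset.sum_Icc_succ_top (by omega : 1 ≤ m + 1), mul_add, ih]
    have h1 : Real.sin (2 * ((m : ℝ) + 1) * θ)
        = Real.sin ((2 * ((m : ℝ) + 1) - 1) * θ + θ) := by congr 1; ring
    have h2 : Real.sin (2 * (m : ℝ) * θ)
        = Real.sin ((2 * ((m : ℝ) + 1) - 1) * θ - θ) := by congr 1; ring
    push_cast
    rw [h1, h2, Real.sin_add, Real.sin_sub]
    ring

/-- Average of cos(p x_k) over the midpoint grid x_k = π(2k-1)/(2n). -/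
theorem cos_average_aliasing (n p : ℕ) (hn : 1 ≤ n) (hp : 1 ≤ p) :
    ((¬ (2 * n ∣ p)) →
      (1 / (n : ℝ)) * ∑ k ∈ Finset.Icc 1 n,
          Real.cos ((p : ℝ) * (Real.pi * (2 * (k : ℝ) - 1) / (2 * n))) = 0) ∧
    (∀ l : ℕ, 1 ≤ l → p = 2 * l * n →
      (1 / (n : ℝ)) * ∑ k ∈ Finset.Icc 1 n,
          Real.cos ((p : ℝ) * (Real.pi * (2 * (k : ℝ) - 1) / (2 * n))) = (-1 : ℝ) ^ l) := by
  have hn0 : (n : ℝ) ≠ 0 := by positivity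
  constructor
  · intro hnd
    set θ : ℝ := (p : ℝ) * Real.pi / (2 * n) with hθ
    have harg : ∀ k : ℕ, (p : ℝ) * (Real.pi * (2 * (k : ℝ) - 1) / (2 * n))
        = (2 * (k : ℝ) - 1) * θ := by
      intro k; rw [hθ]; ring
    have hsin : Real.sin θ ≠ 0 := by
      intro h
      rw [Real.sin_eq_zero_iff] at h
      obtain ⟨m, hm⟩ := h
      apply hnd
      have hπ : Real.pi ≠ 0 := Real.pi_ne_zero
      have h1 : (m : ℝ) * (2 * n) = p := by
        have h2n : (2 * (n : ℝ)) ≠ 0 := by positivity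
        rw [hθ] at hm
        have h' : ((m : ℝ) * (2 * n)) * Real.pi = (p : ℝ) * Real.pi := by
          calc ((m : ℝ) * (2 * n)) * Real.pi = (m : ℝ) * Real.pi * (2 * n) := by ring
            _ = (p : ℝ) * Real.pi / (2 * n) * (2 * n) := by rw [hm]
            _ = (p : ℝ) * Real.pi := div_mul_cancel₀ _ h2n
        exact mul_right_cancel₀ hπ h'
      have h2 : (p : ℤ) = m * (2 * n) := by exact_mod_cast h1.symm
      have h3 : ((2 * n : ℕ) : ℤ) ∣ (p : ℤ) := ⟨m, by push_cast; linarith [h2]⟩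
      exact_mod_cast h3
    have hsum := sum_cos_key θ n
    have h2n : 2 * (n : ℝ) * θ = (p : ℝ) * Real.pi := by
      rw [hθ]; field_simp
    rw [h2n, Real.sin_nat_mul_pi] at hsum
    have hS : ∑ k ∈ Finset.Icc 1 n, Real.cos ((2 * (k : ℝ) - 1) * θ) = 0 := by
      rcases mul_eq_zero.mp hsum with h | h
      · rcases mul_eq_zero.mp h with h' | h'
        · norm_num at h'
        · exact absurd h' hsin
      · exact h
    simp only [harg]
    rw [hS, mul_zero]
  · intro l hl hpl
    have hterm : ∀ k ∈ Finset.Icc 1 n,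
        Real.cos ((p : ℝ) * (Real.pi * (2 * (k : ℝ) - 1) / (2 * n))) = (-1 : ℝ) ^ l := by
      intro k hk
      have hk1 : 1 ≤ k := (Finset.mem_Icc.mp hk).1
      have harg : (p : ℝ) * (Real.pi * (2 * (k : ℝ) - 1) / (2 * n))
          = ((l * (2 * k - 1) : ℕ) : ℝ) * Real.pi := by
        have hc : ((2 * k - 1 : ℕ) : ℝ) = 2 * (k : ℝ) - 1 := by
          push_cast [Nat.cast_sub (by omega : 1 ≤ 2 * k)]; ring
        push_cast [hc, hpl]
        field_simp
      rw [harg, cos_nat_mul_pi']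
      rcases Nat.even_or_odd l with he | ho
      · rw [Even.neg_one_pow (he.mul_right _), he.neg_one_pow]
      · rw [Odd.neg_one_pow (ho.mul ⟨k - 1, by omega⟩), ho.neg_one_pow]
    rw [Finset.sum_congr rfl hterm, Finset.sum_const, Nat.card_Icc]
    simp only [Nat.add_sub_cancel, nsmul_eq_mul]
    field_simp
end

section
/- Let 0 < α < 1, T > 0, p ≥ 1, and let R : [0,T] → ℝ be continuous with R_0 := inf_{[0,T]} R > 0 and ‖R‖_∞ := sup_{[0,T]} |R|. Assume additionally that 0 ≤ E_{α,α}(−x) and E_{α,1}(−p²T^α) ≤ E_{α,1}(−T^α) for all such p (complete-monotonicity facts about the Mittag-Leffler function). Then R_0·(1 − E_{α,1}(−T^α))/p² ≤ ∫_0^T (T−s)^{α−1} E_{α,α}(−p²(T−s)^α) R(s) ds ≤ ‖R‖_∞/p². -/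
/-- The two-parameter Mittag-Leffler function E_{a,b}(z) = ∑ z^j / Γ(aj+b). -/
noncomputable def mittagLeffler (a b z : ℝ) : ℝ :=
  ∑' j : ℕ, z ^ j / Real.Gamma (a * j + b)

open Real MeasureTheory intervalIntegral Filter Set

section ML

/-- Γ(c+1) ≤ Γ(c+α)·(c+α)^(1-α) from log-convexity. -/
lemma gamma_ratio {α : ℝ} (hα0 : 0 < α) (hα1 : α < 1) (c : ℝ) (hc : 0 < c) :
    c * Real.Gamma c ≤ Real.Gamma (c + α) * (c + α) ^ (1 - α) := by
  have h1 : Real.Gamma (α * (c + α) + (1 - α) * (c + α + 1))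
      ≤ Real.Gamma (c + α) ^ α * Real.Gamma (c + α + 1) ^ (1 - α) :=
    Real.Gamma_mul_add_mul_le_rpow_Gamma_mul_rpow_Gamma (by linarith) (by linarith)
      hα0 (by linarith) (by ring)
  have harg : α * (c + α) + (1 - α) * (c + α + 1) = c + 1 := by ring
  rw [harg] at h1
  have hpos : 0 < Real.Gamma (c + α) := Real.Gamma_pos_of_pos (by linarith)
  have h2 : Real.Gamma (c + α + 1) = (c + α) * Real.Gamma (c + α) :=
    Real.Gamma_add_one (by positivity)
  rw [h2, Real.mul_rpow (by positivity) hpos.le] at h1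
  have h3 : Real.Gamma (c + α) ^ α * ((c + α) ^ (1 - α) * Real.Gamma (c + α) ^ (1 - α))
      = Real.Gamma (c + α) * (c + α) ^ (1 - α) := by
    rw [mul_comm ((c + α) ^ (1 - α)), ← mul_assoc, ← Real.rpow_add hpos]
    norm_num
  rw [h3] at h1
  calc c * Real.Gamma c = Real.Gamma (c + 1) := (Real.Gamma_add_one hc.ne').symm
    _ ≤ _ := h1

lemma ml_summable_abs {α : ℝ} (hα0 : 0 < α) (hα1 : α < 1) (b y : ℝ) (hb : 0 < b) :
    Summable (fun j : ℕ => |y| ^ j / Real.Gamma (α * j + b)) := by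
  set Y : ℝ := |y| + 1 with hY
  have hY1 : 1 ≤ Y := by have := abs_nonneg y; linarith
  have hY0 : (0:ℝ) < 4 * Y := by linarith
  have htend : Tendsto (fun j : ℕ => α * j + b) atTop atTop := by
    apply Filter.tendsto_atTop_add_const_right
    exact (tendsto_natCast_atTop_atTop (R := ℝ)).const_mul_atTop hα0
  have hev : ∀ᶠ j : ℕ in atTop, max 1 ((4 * Y) ^ (1/α)) ≤ α * j + b :=
    htend.eventually_ge_atTop _
  apply summable_of_ratio_norm_eventually_le (r := 1/2) (by norm_num)
  filter_upwards [hev] with j hj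
  set c : ℝ := α * j + b with hc
  have hc1 : 1 ≤ c := le_trans (le_max_left _ _) hj
  have hc0 : 0 < c := by linarith
  have hcY : 4 * Y ≤ c ^ α := by
    have h4 : (4 * Y) ^ (1/α) ≤ c := le_trans (le_max_right _ _) hj
    calc 4 * Y = ((4 * Y) ^ (1/α)) ^ α := by
          rw [← Real.rpow_mul hY0.le, one_div, inv_mul_cancel₀ hα0.ne', Real.rpow_one]
      _ ≤ c ^ α := Real.rpow_le_rpow (Real.rpow_nonneg hY0.le _) h4 hα0.le
  -- key: Γ(c+α) ≥ Γ(c) * c^α / 2 ≥ 2|y| Γ(c)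
  have hGc : 0 < Real.Gamma c := Real.Gamma_pos_of_pos hc0
  have hGca : 0 < Real.Gamma (c + α) := Real.Gamma_pos_of_pos (by linarith)
  have hkey : 2 * |y| * Real.Gamma c ≤ Real.Gamma (c + α) := by
    have hr := gamma_ratio hα0 hα1 c hc0
    have hub : (c + α) ^ (1 - α) ≤ 2 * c ^ (1 - α) := by
      calc (c + α) ^ (1 - α) ≤ (2 * c) ^ (1 - α) :=
            Real.rpow_le_rpow (by linarith) (by linarith) (by linarith)
        _ = 2 ^ (1 - α) * c ^ (1 - α) := Real.mul_rpow (by norm_num) hc0.le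
        _ ≤ 2 * c ^ (1 - α) := by
            have : (2:ℝ) ^ (1 - α) ≤ 2 ^ (1:ℝ) :=
              Real.rpow_le_rpow_of_exponent_le (by norm_num) (by linarith)
            rw [Real.rpow_one] at this
            have := Real.rpow_nonneg hc0.le (1 - α)
            nlinarith
    have hcsplit : c ^ (1 - α) * c ^ α = c := by
      rw [← Real.rpow_add hc0]; norm_num
    have hca : 0 < c ^ α := Real.rpow_pos_of_pos hc0 α
    have hc1a : 0 < c ^ (1 - α) := Real.rpow_pos_of_pos hc0 (1 - α)
    -- from hr: c Γc ≤ Γ(c+α) (c+α)^{1-α} ≤ Γ(c+α) 2 c^{1-α}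
    have h5 : c * Real.Gamma c ≤ Real.Gamma (c + α) * (2 * c ^ (1 - α)) := by
      calc c * Real.Gamma c ≤ Real.Gamma (c + α) * (c + α) ^ (1 - α) := hr
        _ ≤ _ := by nlinarith
    -- divide by 2 c^{1-α}:  Γ(c+α) ≥ c^α Γ c / 2 ≥ 2 Y Γ c ≥ 2|y| Γ c
    have h6 : c ^ α * (c * Real.Gamma c) ≤ 2 * Real.Gamma (c + α) * c := by
      calc c ^ α * (c * Real.Gamma c) ≤ c ^ α * (Real.Gamma (c + α) * (2 * c ^ (1 - α))) := by
            nlinarith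
        _ = 2 * Real.Gamma (c + α) * (c ^ (1 - α) * c ^ α) := by ring
        _ = 2 * Real.Gamma (c + α) * c := by rw [hcsplit]
    have h6' : c ^ α * Real.Gamma c ≤ 2 * Real.Gamma (c + α) := by
      nlinarith
    have h8 : |y| ≤ Y := by simp [hY]
    nlinarith
  -- conclude ratio bound
  have hGpos1 : 0 < Real.Gamma (α * (j+1 : ℕ) + b) := by
    apply Real.Gamma_pos_of_pos; push_cast; nlinarith [Nat.cast_nonneg (α := ℝ) j]
  have harg : α * ((j:ℕ)+1 : ℕ) + b = c + α := by push_cast; ring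
  rw [Real.norm_eq_abs, Real.norm_eq_abs, abs_div, abs_div, abs_pow, abs_pow, abs_abs]
  rw [harg, abs_of_pos hGca, abs_of_pos hGc]
  rw [div_le_iff₀ hGca, pow_succ]
  have hA : (0:ℝ) ≤ |y| ^ j := pow_nonneg (abs_nonneg y) j
  have hGc' : Real.Gamma c ≠ 0 := hGc.ne'
  calc |y| ^ j * |y| = 2⁻¹ * (|y| ^ j / Real.Gamma c) * (2 * |y| * Real.Gamma c) := by
        field_simp
    _ ≤ 2⁻¹ * (|y| ^ j / Real.Gamma c) * Real.Gamma (c + α) :=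
        mul_le_mul_of_nonneg_left hkey (by positivity)
    _ = 1 / 2 * (|y| ^ j / Real.Gamma c) * Real.Gamma (c + α) := by ring

lemma gamma_arg_pos {α : ℝ} (hα0 : 0 < α) (b : ℝ) (hb : 0 < b) (j : ℕ) :
    0 < α * j + b := by
  have : (0:ℝ) ≤ α * j := by positivity
  linarith

lemma ml_summable {α : ℝ} (hα0 : 0 < α) (hα1 : α < 1) (b y : ℝ) (hb : 0 < b) :
    Summable (fun j : ℕ => y ^ j / Real.Gamma (α * j + b)) := by
  apply Summable.of_norm
  have h := ml_summable_abs hα0 hα1 b y hb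
  convert h using 2 with j
  rw [norm_div, norm_pow, Real.norm_eq_abs, Real.norm_eq_abs,
    abs_of_pos (Real.Gamma_pos_of_pos (gamma_arg_pos hα0 b hb j))]

lemma ml_norm_eq {α : ℝ} (hα0 : 0 < α) (b y : ℝ) (hb : 0 < b) (j : ℕ) :
    |y ^ j / Real.Gamma (α * j + b)| = |y| ^ j / Real.Gamma (α * j + b) := by
  rw [abs_div, abs_pow, abs_of_pos (Real.Gamma_pos_of_pos (gamma_arg_pos hα0 b hb j))]

lemma ml_continuous {α : ℝ} (hα0 : 0 < α) (hα1 : α < 1) (b : ℝ) (hb : 0 < b) :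
    Continuous (mittagLeffler α b) := by
  rw [continuous_iff_continuousAt]
  intro x
  set M : ℝ := |x| + 1 with hM
  have hM0 : 0 < M := by have := abs_nonneg x; linarith
  have hcont : ContinuousOn (mittagLeffler α b) (Icc (-M) M) := by
    show ContinuousOn (fun z : ℝ => ∑' j : ℕ, z ^ j / Real.Gamma (α * j + b)) (Icc (-M) M)
    apply continuousOn_tsum (u := fun j : ℕ => M ^ j / Real.Gamma (α * j + b))
    · exact fun i => ((continuous_pow i).div_const _).continuousOn
    · simpa [abs_of_pos hM0] using ml_summable_abs hα0 hα1 b M hb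
    · intro j z hz
      rw [Real.norm_eq_abs, ml_norm_eq hα0 b z hb j]
      gcongr
      exact abs_le.2 ⟨hz.1, hz.2⟩
  exact hcont.continuousAt (Icc_mem_nhds (by cases abs_le.1 (le_refl |x|) with
    | intro h1 h2 => linarith [neg_abs_le x]) (by linarith [le_abs_self x]))

lemma ml_at_zero {α : ℝ} (b : ℝ) : mittagLeffler α b 0 = 1 / Real.Gamma b := by
  unfold mittagLeffler
  rw [tsum_eq_single 0]
  · norm_num
  · intro j hj
    rw [zero_pow hj, zero_div]

lemma rpow_nat_aux (x : ℝ) (hx : 0 ≤ x) (r : ℝ) (j : ℕ) : (x ^ r) ^ j = x ^ (r * j) := by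
  rw [← Real.rpow_natCast (x ^ r) j, ← Real.rpow_mul hx]

lemma real_beta (a b t : ℝ) (ha : 0 < a) (hb : 0 < b) (ht : 0 < t) :
    ∫ s in (0:ℝ)..t, s ^ (b - 1) * (t - s) ^ (a - 1)
      = Real.Gamma a * Real.Gamma b / Real.Gamma (a + b) * t ^ (a + b - 1) := by
  have hC := Complex.betaIntegral_scaled (b:ℂ) (a:ℂ) ht
  have hG := Complex.Gamma_mul_Gamma_eq_betaIntegral (s := (b:ℂ)) (t := (a:ℂ))
    (by simpa using hb) (by simpa using ha)
  have hGab : Complex.Gamma ((b:ℂ) + (a:ℂ)) ≠ 0 := by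
    rw [← Complex.ofReal_add, Complex.Gamma_ofReal]
    exact_mod_cast (Real.Gamma_pos_of_pos (by linarith)).ne'
  have hbeta : Complex.betaIntegral (b:ℂ) (a:ℂ)
      = ((Real.Gamma a * Real.Gamma b / Real.Gamma (a + b) : ℝ) : ℂ) := by
    have h1 : Complex.betaIntegral (b:ℂ) (a:ℂ)
        = Complex.Gamma (b:ℂ) * Complex.Gamma (a:ℂ) / Complex.Gamma ((b:ℂ) + (a:ℂ)) := by
      rw [eq_div_iff hGab]
      linear_combination -hG
    rw [h1, Complex.Gamma_ofReal, Complex.Gamma_ofReal, ← Complex.ofReal_add,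
      Complex.Gamma_ofReal, add_comm b a]
    push_cast
    ring
  have hL : (∫ x in (0:ℝ)..t, (x:ℂ) ^ ((b:ℂ) - 1) * ((t:ℂ) - x) ^ ((a:ℂ) - 1))
      = ((∫ s in (0:ℝ)..t, s ^ (b - 1) * (t - s) ^ (a - 1) : ℝ) : ℂ) := by
    rw [← intervalIntegral.integral_ofReal]
    apply intervalIntegral.integral_congr
    intro x hx
    rw [uIcc_of_le ht.le] at hx
    have hx0 : (0:ℝ) ≤ x := hx.1
    have hxt : (0:ℝ) ≤ t - x := by linarith [hx.2]
    simp only [Complex.ofReal_mul]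
    rw [show ((b:ℂ) - 1) = ((b - 1 : ℝ) : ℂ) by push_cast; ring,
      show ((a:ℂ) - 1) = ((a - 1 : ℝ) : ℂ) by push_cast; ring,
      show ((t:ℂ) - (x:ℂ)) = ((t - x : ℝ) : ℂ) by push_cast; ring,
      ← Complex.ofReal_cpow hx0, ← Complex.ofReal_cpow hxt]
  have hR : ((t:ℂ)) ^ ((b:ℂ) + (a:ℂ) - 1) = ((t ^ (a + b - 1) : ℝ) : ℂ) := by
    rw [show ((b:ℂ) + (a:ℂ) - 1) = ((a + b - 1 : ℝ) : ℂ) by push_cast; ring,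
      ← Complex.ofReal_cpow ht.le]
  rw [hL, hR, hbeta] at hC
  rw [← Complex.ofReal_mul] at hC
  have hC' : (∫ s in (0:ℝ)..t, s ^ (b - 1) * (t - s) ^ (a - 1))
      = t ^ (a + b - 1) * (Real.Gamma a * Real.Gamma b / Real.Gamma (a + b)) := by
    exact_mod_cast hC
  rw [hC']; ring

lemma integral_rpow_Ioc (X q : ℝ) (hX : 0 < X) (hq : -1 < q) :
    ∫ v in Ioc (0:ℝ) X, v ^ q = X ^ (q + 1) / (q + 1) := by
  rw [← intervalIntegral.integral_of_le hX.le, integral_rpow (Or.inl hq),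
    Real.zero_rpow (by linarith : q + 1 ≠ 0)]
  ring

lemma key1 {α : ℝ} (hα0 : 0 < α) (hα1 : α < 1) (c X : ℝ) (hc : 0 < c) (hX : 0 ≤ X) :
    c * ∫ v in (0:ℝ)..X, v ^ (α - 1) * mittagLeffler α α (-c * v ^ α)
      = 1 - mittagLeffler α 1 (-c * X ^ α) := by
  rcases eq_or_lt_of_le hX with rfl | hX0
  · simp [Real.zero_rpow hα0.ne', ml_at_zero, Real.Gamma_one]
  have hapos : ∀ j : ℕ, (0:ℝ) < α * j + α := fun j => by
    have : (0:ℝ) ≤ α * j := by positivity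
    linarith
  have hGpos : ∀ j : ℕ, 0 < Real.Gamma (α * j + α) := fun j => Real.Gamma_pos_of_pos (hapos j)
  have hq1 : ∀ j : ℕ, (-1:ℝ) < α * j + α - 1 := fun j => by linarith [hapos j]
  -- integrability of each term
  have hFint : ∀ j : ℕ, Integrable
      (fun v : ℝ => (-c) ^ j / Real.Gamma (α * j + α) * v ^ (α * j + α - 1))
      (volume.restrict (Ioc 0 X)) := by
    intro j
    exact ((intervalIntegrable_rpow' (hq1 j)).const_mul
      ((-c) ^ j / Real.Gamma (α * j + α))).1
  -- norm integrals
  have hnormval : ∀ j : ℕ, (∫ v in Ioc (0:ℝ) X,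
      ‖(-c) ^ j / Real.Gamma (α * j + α) * v ^ (α * j + α - 1)‖)
      = c ^ j / Real.Gamma (α * j + α) * (X ^ (α * j + α) / (α * j + α)) := by
    intro j
    have heq : EqOn (fun v : ℝ => ‖(-c) ^ j / Real.Gamma (α * j + α) * v ^ (α * j + α - 1)‖)
        (fun v : ℝ => c ^ j / Real.Gamma (α * j + α) * v ^ (α * j + α - 1)) (Ioc 0 X) := by
      intro v hv
      simp only [Real.norm_eq_abs, abs_mul, abs_div, abs_pow, abs_neg,
        abs_of_pos hc, abs_of_pos (hGpos j),
        abs_of_nonneg (Real.rpow_nonneg hv.1.le _)]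
    rw [setIntegral_congr_fun measurableSet_Ioc heq, MeasureTheory.integral_const_mul,
      integral_rpow_Ioc X _ hX0 (hq1 j)]
    rw [show α * j + α - 1 + 1 = α * j + α from by ring]
  -- summability of norm integrals
  have hsum : Summable (fun j : ℕ => ∫ v in Ioc (0:ℝ) X,
      ‖(-c) ^ j / Real.Gamma (α * j + α) * v ^ (α * j + α - 1)‖) := by
    rw [summable_congr hnormval]
    refine Summable.of_nonneg_of_le
      (f := fun j : ℕ => X ^ α / α * ((c * X ^ α) ^ j / Real.Gamma (α * j + α)))
      (fun j => by positivity) (fun j => ?_) ?_ 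
    · have hXa : (0:ℝ) < X ^ α := Real.rpow_pos_of_pos hX0 α
      have hXexp : X ^ (α * j + α) = (X ^ α) ^ j * X ^ α := by
        rw [rpow_nat_aux X hX0.le α j, ← Real.rpow_add hX0]
      simp only [mul_pow]
      rw [hXexp]
      have h1 : c ^ j * ((X ^ α) ^ j * X ^ α) / (α * j + α)
          ≤ c ^ j * ((X ^ α) ^ j * X ^ α) / α := by
        apply div_le_div_of_nonneg_left (by positivity) hα0
        have : (0:ℝ) ≤ α * j := by positivity
        linarith
      calc c ^ j / Real.Gamma (α * j + α) * ((X ^ α) ^ j * X ^ α / (α * j + α))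
          = c ^ j * ((X ^ α) ^ j * X ^ α) / (α * j + α) / Real.Gamma (α * j + α) := by
            ring
        _ ≤ c ^ j * ((X ^ α) ^ j * X ^ α) / α / Real.Gamma (α * j + α) := by
            gcongr
        _ = X ^ α / α * (c ^ j * (X ^ α) ^ j / Real.Gamma (α * j + α)) := by ring
    · have h := (ml_summable_abs hα0 hα1 α (c * X ^ α) hα0).mul_left (X ^ α / α)
      have habs : |c * X ^ α| = c * X ^ α :=
        abs_of_nonneg (by positivity)
      simpa [habs] using h
  -- pointwise identity on Ioc
  have hpt : EqOn (fun v : ℝ => v ^ (α - 1) * mittagLeffler α α (-c * v ^ α))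
      (fun v : ℝ => ∑' j : ℕ, (-c) ^ j / Real.Gamma (α * j + α) * v ^ (α * j + α - 1))
      (Ioc 0 X) := by
    intro v hv
    have hv0 : (0:ℝ) < v := hv.1
    show v ^ (α - 1) * mittagLeffler α α (-c * v ^ α) = _
    unfold mittagLeffler
    rw [← tsum_mul_left]
    refine tsum_congr fun j => ?_
    rw [mul_pow, rpow_nat_aux v hv0.le α j]
    calc v ^ (α - 1) * ((-c) ^ j * (v ^ (α * j)) / Real.Gamma (α * j + α))
        = (-c) ^ j / Real.Gamma (α * j + α) * (v ^ (α - 1) * v ^ (α * j)) := by ring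
      _ = (-c) ^ j / Real.Gamma (α * j + α) * v ^ (α * j + α - 1) := by
          rw [← Real.rpow_add hv0, show α - 1 + α * (j:ℕ) = α * j + α - 1 from by ring]
  have hswap := MeasureTheory.integral_tsum_of_summable_integral_norm hFint hsum
  have hval : ∀ j : ℕ, (∫ v in Ioc (0:ℝ) X,
      (-c) ^ j / Real.Gamma (α * j + α) * v ^ (α * j + α - 1))
      = (-c) ^ j / Real.Gamma (α * j + α) * (X ^ (α * j + α) / (α * j + α)) := by
    intro j
    rw [MeasureTheory.integral_const_mul, integral_rpow_Ioc X _ hX0 (hq1 j),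
      show α * (j:ℕ) + α - 1 + 1 = α * j + α from by ring]
  have hsml : Summable (fun k : ℕ => (-c * X ^ α) ^ k / Real.Gamma (α * k + 1)) :=
    ml_summable hα0 hα1 1 _ one_pos
  have hshift := Summable.tsum_eq_zero_add hsml
  calc c * ∫ v in (0:ℝ)..X, v ^ (α - 1) * mittagLeffler α α (-c * v ^ α)
      = c * ∫ v in Ioc (0:ℝ) X,
          ∑' j : ℕ, (-c) ^ j / Real.Gamma (α * j + α) * v ^ (α * j + α - 1) := by
        rw [intervalIntegral.integral_of_le hX0.le, setIntegral_congr_fun measurableSet_Ioc hpt]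
    _ = c * ∑' j : ℕ, ∫ v in Ioc (0:ℝ) X,
          (-c) ^ j / Real.Gamma (α * j + α) * v ^ (α * j + α - 1) := by rw [← hswap]
    _ = ∑' j : ℕ, -((-c * X ^ α) ^ (j+1) / Real.Gamma (α * ((j:ℕ)+1) + 1)) := by
        rw [← tsum_mul_left]
        refine tsum_congr fun j => ?_
        rw [hval j]
        have hXexp : (X ^ α) ^ (j+1) = X ^ (α * j + α) := by
          rw [rpow_nat_aux X hX0.le α (j+1)]
          congr 1
          push_cast; ring
        have hGrec : Real.Gamma (α * ((j:ℕ)+1) + 1) = (α * j + α) * Real.Gamma (α * j + α) := by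
          rw [show (α * ((j:ℕ)+1) + 1 : ℝ) = (α * j + α) + 1 from by push_cast; ring,
            Real.Gamma_add_one (hapos j).ne']
        rw [mul_pow, hXexp, hGrec, pow_succ]
        have h1 := (hGpos j).ne'
        have h2 := (hapos j).ne'
        field_simp
    _ = -(∑' j : ℕ, (-c * X ^ α) ^ (j+1) / Real.Gamma (α * ((j:ℕ)+1) + 1)) := by
        rw [tsum_neg]
    _ = 1 - mittagLeffler α 1 (-c * X ^ α) := by
        unfold mittagLeffler
        rw [hshift]
        simp [Real.Gamma_one]

lemma ker_integrable {α : ℝ} (hα0 : 0 < α) (hα1 : α < 1) (c a b : ℝ) :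
    IntervalIntegrable (fun v : ℝ => v ^ (α - 1) * mittagLeffler α α (-c * v ^ α))
      volume a b := by
  apply (intervalIntegrable_rpow' (by linarith : (-1:ℝ) < α - 1)).mul_continuousOn
  exact ((ml_continuous hα0 hα1 α hα0).comp
    (continuous_const.mul (Real.continuous_rpow_const hα0.le) : Continuous fun v : ℝ => -c * v ^ α)).continuousOn

lemma ker_integrable' {α : ℝ} (hα0 : 0 < α) (hα1 : α < 1) (t a b : ℝ)
    {g : ℝ → ℝ} (hg : ContinuousOn g (uIcc a b)) :
    IntervalIntegrable (fun s : ℝ => (t - s) ^ (α - 1) * g s) volume a b := by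
  apply IntervalIntegrable.mul_continuousOn ?_ hg
  have h := (intervalIntegrable_rpow' (by linarith : (-1:ℝ) < α - 1)
    (a := t - a) (b := t - b)).comp_sub_left t
  simpa using h

lemma volterra {α : ℝ} (hα0 : 0 < α) (hα1 : α < 1) (t : ℝ) (ht : 0 ≤ t) :
    ∫ s in (0:ℝ)..t, (t - s) ^ (α - 1) * mittagLeffler α 1 (-(s ^ α))
      = Real.Gamma α * (1 - mittagLeffler α 1 (-(t ^ α))) := by
  rcases eq_or_lt_of_le ht with rfl | ht0
  · simp [Real.zero_rpow hα0.ne', ml_at_zero, Real.Gamma_one]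
  have hapos : ∀ j : ℕ, (0:ℝ) < α * j + 1 := fun j => by
    have : (0:ℝ) ≤ α * j := by positivity
    linarith
  have haapos : ∀ j : ℕ, (0:ℝ) < α * j + α := fun j => by
    have : (0:ℝ) ≤ α * j := by positivity
    linarith
  have hGpos : ∀ j : ℕ, 0 < Real.Gamma (α * j + 1) := fun j => Real.Gamma_pos_of_pos (hapos j)
  have hGapos : ∀ j : ℕ, 0 < Real.Gamma (α * j + α) := fun j => Real.Gamma_pos_of_pos (haapos j)
  -- beta values
  have hbeta : ∀ j : ℕ, (∫ s in (0:ℝ)..t, s ^ (α * j) * (t - s) ^ (α - 1))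
      = Real.Gamma α * Real.Gamma (α * j + 1) / Real.Gamma (α * j + α + 1) * t ^ (α * j + α) := by
    intro j
    have h := real_beta α (α * j + 1) t hα0 (hapos j) ht0
    rw [show α * (j:ℕ) + 1 - 1 = α * j from by ring] at h
    rw [h, show α + (α * (j:ℕ) + 1) - 1 = α * j + α from by ring,
      show α + (α * (j:ℕ) + 1) = α * j + α + 1 from by ring]
  -- integrability of terms
  have hcont_pow : ∀ j : ℕ, Continuous (fun s : ℝ => s ^ (α * (j:ℕ))) := fun j =>
    Real.continuous_rpow_const (by positivity)
  have hFint : ∀ j : ℕ, Integrable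
      (fun s : ℝ => (-1:ℝ) ^ j / Real.Gamma (α * j + 1) * (s ^ (α * (j:ℕ)) * (t - s) ^ (α - 1)))
      (volume.restrict (Ioc 0 t)) := by
    intro j
    have h1 : IntervalIntegrable (fun s : ℝ => (t - s) ^ (α - 1) * s ^ (α * (j:ℕ)))
        volume 0 t := ker_integrable' hα0 hα1 t 0 t (hcont_pow j).continuousOn
    have h2 := (h1.const_mul ((-1:ℝ) ^ j / Real.Gamma (α * j + 1))).1
    apply h2.congr
    filter_upwards with s
    ring
  -- norm integrals
  have hnormval : ∀ j : ℕ, (∫ s in Ioc (0:ℝ) t,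
      ‖(-1:ℝ) ^ j / Real.Gamma (α * j + 1) * (s ^ (α * (j:ℕ)) * (t - s) ^ (α - 1))‖)
      = Real.Gamma α * t ^ (α * j + α) / Real.Gamma (α * j + α + 1) := by
    intro j
    have heq : EqOn (fun s : ℝ =>
        ‖(-1:ℝ) ^ j / Real.Gamma (α * j + 1) * (s ^ (α * (j:ℕ)) * (t - s) ^ (α - 1))‖)
        (fun s : ℝ => 1 / Real.Gamma (α * j + 1) * (s ^ (α * (j:ℕ)) * (t - s) ^ (α - 1)))
        (Ioc 0 t) := by
      intro s hs
      have h1 : (0:ℝ) ≤ s ^ (α * (j:ℕ)) := Real.rpow_nonneg hs.1.le _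
      have h2 : (0:ℝ) ≤ (t - s) ^ (α - 1) := Real.rpow_nonneg (by linarith [hs.2]) _
      simp only [Real.norm_eq_abs, abs_mul, abs_div, abs_pow, abs_neg, abs_one, one_pow,
        abs_of_pos (hGpos j), abs_of_nonneg h1, abs_of_nonneg h2]
    rw [setIntegral_congr_fun measurableSet_Ioc heq, MeasureTheory.integral_const_mul,
      ← intervalIntegral.integral_of_le ht0.le, hbeta j]
    have hG1 : Real.Gamma (α * j + 1) ≠ 0 := (hGpos j).ne'
    field_simp
  -- summability of norm integrals
  have hsum : Summable (fun j : ℕ => ∫ s in Ioc (0:ℝ) t,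
      ‖(-1:ℝ) ^ j / Real.Gamma (α * j + 1) * (s ^ (α * (j:ℕ)) * (t - s) ^ (α - 1))‖) := by
    rw [summable_congr hnormval]
    refine Summable.of_nonneg_of_le
      (f := fun j : ℕ => Real.Gamma α * t ^ α / α * ((t ^ α) ^ j / Real.Gamma (α * j + α)))
      (fun j => by positivity) (fun j => ?_) ?_
    · have hexp : t ^ (α * j + α) = (t ^ α) ^ j * t ^ α := by
        rw [rpow_nat_aux t ht0.le α j, ← Real.rpow_add ht0]
      have hGrec : Real.Gamma (α * j + α + 1) = (α * j + α) * Real.Gamma (α * j + α) :=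
        Real.Gamma_add_one (haapos j).ne'
      rw [hexp, hGrec]
      have h1 : (0:ℝ) < (α * j + α) * Real.Gamma (α * j + α) := by
        exact mul_pos (haapos j) (hGapos j)
      have hle : α ≤ α * j + α := by
        have : (0:ℝ) ≤ α * j := by positivity
        linarith
      calc Real.Gamma α * ((t ^ α) ^ j * t ^ α) / ((α * j + α) * Real.Gamma (α * j + α))
          ≤ Real.Gamma α * ((t ^ α) ^ j * t ^ α) / (α * Real.Gamma (α * j + α)) := by
            apply div_le_div_of_nonneg_left ?_ ?_ ?_
            · positivity
            · positivity
            · exact mul_le_mul_of_nonneg_right hle (hGapos j).le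
        _ = Real.Gamma α * t ^ α / α * ((t ^ α) ^ j / Real.Gamma (α * j + α)) := by
            field_simp
    · have h := (ml_summable_abs hα0 hα1 α (t ^ α) hα0).mul_left (Real.Gamma α * t ^ α / α)
      have habs : |t ^ α| = t ^ α := abs_of_nonneg (by positivity)
      simpa [habs] using h
  -- pointwise identity
  have hpt : EqOn (fun s : ℝ => (t - s) ^ (α - 1) * mittagLeffler α 1 (-(s ^ α)))
      (fun s : ℝ => ∑' j : ℕ,
        (-1:ℝ) ^ j / Real.Gamma (α * j + 1) * (s ^ (α * (j:ℕ)) * (t - s) ^ (α - 1)))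
      (Ioc 0 t) := by
    intro s hs
    show (t - s) ^ (α - 1) * mittagLeffler α 1 (-(s ^ α)) = _
    unfold mittagLeffler
    rw [← tsum_mul_left]
    refine tsum_congr fun j => ?_
    rw [show -(s ^ α) = (-1) * s ^ α from by ring, mul_pow, rpow_nat_aux s hs.1.le α j]
    ring
  have hswap := MeasureTheory.integral_tsum_of_summable_integral_norm hFint hsum
  have hval : ∀ j : ℕ, (∫ s in Ioc (0:ℝ) t,
      (-1:ℝ) ^ j / Real.Gamma (α * j + 1) * (s ^ (α * (j:ℕ)) * (t - s) ^ (α - 1)))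
      = (-1:ℝ) ^ j * Real.Gamma α * t ^ (α * j + α) / Real.Gamma (α * j + α + 1) := by
    intro j
    rw [MeasureTheory.integral_const_mul, ← intervalIntegral.integral_of_le ht0.le, hbeta j]
    have hG1 : Real.Gamma (α * j + 1) ≠ 0 := (hGpos j).ne'
    field_simp
  have hsml : Summable (fun k : ℕ => (-(t ^ α)) ^ k / Real.Gamma (α * k + 1)) :=
    ml_summable hα0 hα1 1 _ one_pos
  have hshift := Summable.tsum_eq_zero_add hsml
  calc ∫ s in (0:ℝ)..t, (t - s) ^ (α - 1) * mittagLeffler α 1 (-(s ^ α))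
      = ∫ s in Ioc (0:ℝ) t, ∑' j : ℕ,
          (-1:ℝ) ^ j / Real.Gamma (α * j + 1) * (s ^ (α * (j:ℕ)) * (t - s) ^ (α - 1)) := by
        rw [intervalIntegral.integral_of_le ht0.le, setIntegral_congr_fun measurableSet_Ioc hpt]
    _ = ∑' j : ℕ, ∫ s in Ioc (0:ℝ) t,
          (-1:ℝ) ^ j / Real.Gamma (α * j + 1) * (s ^ (α * (j:ℕ)) * (t - s) ^ (α - 1)) := by
        rw [← hswap]
    _ = ∑' j : ℕ, Real.Gamma α * (-((-(t ^ α)) ^ (j+1) / Real.Gamma (α * ((j:ℕ)+1) + 1))) := by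
        refine tsum_congr fun j => ?_
        rw [hval j]
        have hexp : (t ^ α) ^ (j+1) = t ^ (α * j + α) := by
          rw [rpow_nat_aux t ht0.le α (j+1)]
          congr 1
          push_cast; ring
        have hGrec : Real.Gamma (α * ((j:ℕ)+1) + 1) = (α * j + α) * Real.Gamma (α * j + α) := by
          rw [show (α * ((j:ℕ)+1) + 1 : ℝ) = (α * j + α) + 1 from by push_cast; ring,
            Real.Gamma_add_one (haapos j).ne']
        rw [neg_pow (t ^ α) (j+1), hexp, hGrec,
          show α * (j:ℕ) + α + 1 = (α * j + α) + 1 from by ring,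
          Real.Gamma_add_one (haapos j).ne', pow_succ]
        have h1 := (hGapos j).ne'
        have h2 := (haapos j).ne'
        field_simp
    _ = Real.Gamma α * -(∑' j : ℕ, (-(t ^ α)) ^ (j+1) / Real.Gamma (α * ((j:ℕ)+1) + 1)) := by
        rw [← tsum_neg, tsum_mul_left]
    _ = Real.Gamma α * (1 - mittagLeffler α 1 (-(t ^ α))) := by
        unfold mittagLeffler
        rw [hshift]
        simp [Real.Gamma_one]

noncomputable def mlu (α : ℝ) : ℝ → ℝ := fun t => mittagLeffler α 1 (-(t ^ α))

lemma mlu_cont {α : ℝ} (hα0 : 0 < α) (hα1 : α < 1) : Continuous (mlu α) :=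
  (ml_continuous hα0 hα1 1 one_pos).comp (Real.continuous_rpow_const hα0.le).neg

lemma mlu_zero {α : ℝ} (hα0 : 0 < α) : mlu α 0 = 1 := by
  unfold mlu
  rw [Real.zero_rpow hα0.ne', neg_zero, ml_at_zero, Real.Gamma_one]
  norm_num

lemma mlu_rep {α : ℝ} (hα0 : 0 < α) (hα1 : α < 1) (t : ℝ) (ht : 0 ≤ t) :
    mlu α t = 1 - ∫ v in (0:ℝ)..t, v ^ (α - 1) * mittagLeffler α α (-1 * v ^ α) := by
  have h := key1 hα0 hα1 1 t one_pos ht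
  rw [one_mul] at h
  unfold mlu
  rw [show -(t ^ α) = -1 * t ^ α from by ring]
  linarith [h]

lemma mlu_mono {α : ℝ} (hα0 : 0 < α) (hα1 : α < 1)
    (hEpos : ∀ x : ℝ, 0 ≤ x → 0 ≤ mittagLeffler α α (-x))
    (s t : ℝ) (hs : 0 ≤ s) (hst : s ≤ t) : mlu α t ≤ mlu α s := by
  have hker_nonneg : ∀ v : ℝ, 0 ≤ v → 0 ≤ v ^ (α - 1) * mittagLeffler α α (-1 * v ^ α) := by
    intro v hv
    apply mul_nonneg (Real.rpow_nonneg hv _)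
    have h := hEpos (v ^ α) (Real.rpow_nonneg hv α)
    rwa [show -1 * v ^ α = -(v ^ α) from by ring]
  rw [mlu_rep hα0 hα1 s hs, mlu_rep hα0 hα1 t (hs.trans hst)]
  have hint1 := ker_integrable hα0 hα1 1 0 s
  have hint2 := ker_integrable hα0 hα1 1 s t
  have hsplit := intervalIntegral.integral_add_adjacent_intervals
    (f := fun v : ℝ => v ^ (α - 1) * mittagLeffler α α (-1 * v ^ α)) (μ := volume) hint1 hint2
  have hpos : 0 ≤ ∫ v in s..t, v ^ (α - 1) * mittagLeffler α α (-1 * v ^ α) :=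
    intervalIntegral.integral_nonneg hst (fun v hv => hker_nonneg v (le_trans hs hv.1))
  linarith

lemma ml_one_nonneg {α : ℝ} (hα0 : 0 < α) (hα1 : α < 1)
    (hEpos : ∀ x : ℝ, 0 ≤ x → 0 ≤ mittagLeffler α α (-x)) :
    ∀ x : ℝ, 0 ≤ x → 0 ≤ mittagLeffler α 1 (-x) := by
  have hGa : 0 < Real.Gamma α := Real.Gamma_pos_of_pos hα0
  intro x hx
  rcases eq_or_lt_of_le hx with rfl | hx0
  · rw [neg_zero, ml_at_zero, Real.Gamma_one]; norm_num
  by_contra hneg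
  push_neg at hneg
  set t1 : ℝ := x ^ (α⁻¹) with ht1def
  have ht1pos : 0 < t1 := Real.rpow_pos_of_pos hx0 _
  have ht1x : t1 ^ α = x := by
    rw [ht1def, ← Real.rpow_mul hx, inv_mul_cancel₀ hα0.ne', Real.rpow_one]
  have hut1 : mlu α t1 < 0 := by
    unfold mlu
    rw [ht1x]
    exact hneg
  set S : Set ℝ := {s : ℝ | s ∈ Icc 0 t1 ∧ mlu α s ≤ 0} with hS
  have hne : t1 ∈ S := ⟨⟨ht1pos.le, le_refl _⟩, hut1.le⟩
  have hbdd : BddBelow S := ⟨0, fun s hs => hs.1.1⟩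
  have hclosed : IsClosed S := by
    have hSe : S = Icc 0 t1 ∩ mlu α ⁻¹' (Iic 0) := by
      rfl
    rw [hSe]
    exact isClosed_Icc.inter (isClosed_Iic.preimage (mlu_cont hα0 hα1))
  set t0 := sInf S with ht0def
  have ht0S : t0 ∈ S := hclosed.csInf_mem ⟨t1, hne⟩ hbdd
  have ht0pos : 0 < t0 := by
    rcases (ht0S.1.1).lt_or_eq with h | h
    · exact h
    · exfalso
      have h1 := ht0S.2
      rw [← h, mlu_zero hα0] at h1
      linarith
  have hupos : ∀ s, 0 ≤ s → s < t0 → 0 < mlu α s := by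
    intro s hs hst
    by_contra hns
    push_neg at hns
    have hmem : s ∈ S := ⟨⟨hs, le_trans hst.le ht0S.1.2⟩, hns⟩
    exact absurd (csInf_le hbdd hmem) (not_le.mpr hst)
  have hu_t0_nonneg : 0 ≤ mlu α t0 := by
    have htend : Tendsto (mlu α) (nhdsWithin t0 (Iio t0)) (nhds (mlu α t0)) :=
      ((mlu_cont hα0 hα1).continuousAt).tendsto.mono_left nhdsWithin_le_nhds
    apply ge_of_tendsto htend
    filter_upwards [Ioo_mem_nhdsLT ht0pos] with s hs
    exact (hupos s hs.1.le hs.2).le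
  have hu_t0 : mlu α t0 = 0 := le_antisymm ht0S.2 hu_t0_nonneg
  have ht0t1 : t0 < t1 := by
    rcases (ht0S.1.2).lt_or_eq with h | h
    · exact h
    · exfalso
      rw [h] at hu_t0
      linarith
  -- Volterra identities
  have hV0 : ∫ s in (0:ℝ)..t0, (t0 - s) ^ (α - 1) * mlu α s
      = Real.Gamma α * (1 - mlu α t0) := volterra hα0 hα1 t0 ht0pos.le
  have hV1 : ∫ s in (0:ℝ)..t1, (t1 - s) ^ (α - 1) * mlu α s
      = Real.Gamma α * (1 - mlu α t1) := volterra hα0 hα1 t1 ht1pos.le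
  have hcont : Continuous (mlu α) := mlu_cont hα0 hα1
  have h1 : IntervalIntegrable (fun s : ℝ => (t1 - s) ^ (α - 1) * mlu α s) volume 0 t0 :=
    ker_integrable' hα0 hα1 t1 0 t0 hcont.continuousOn
  have h2 : IntervalIntegrable (fun s : ℝ => (t1 - s) ^ (α - 1) * mlu α s) volume t0 t1 :=
    ker_integrable' hα0 hα1 t1 t0 t1 hcont.continuousOn
  have h0 : IntervalIntegrable (fun s : ℝ => (t0 - s) ^ (α - 1) * mlu α s) volume 0 t0 :=
    ker_integrable' hα0 hα1 t0 0 t0 hcont.continuousOn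
  have hsplit := intervalIntegral.integral_add_adjacent_intervals
    (f := fun s : ℝ => (t1 - s) ^ (α - 1) * mlu α s) (μ := volume) h1 h2
  have hI2 : (∫ s in t0..t1, (t1 - s) ^ (α - 1) * mlu α s) ≤ 0 := by
    have hneg' : 0 ≤ ∫ s in t0..t1, -((t1 - s) ^ (α - 1) * mlu α s) := by
      apply intervalIntegral.integral_nonneg ht0t1.le
      intro s hs
      have hk : 0 ≤ (t1 - s) ^ (α - 1) := Real.rpow_nonneg (by linarith [hs.2]) _
      have hu : mlu α s ≤ 0 := by
        have := mlu_mono hα0 hα1 hEpos t0 s ht0pos.le hs.1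
        linarith [hu_t0]
      nlinarith
    rw [intervalIntegral.integral_neg] at hneg'
    linarith
  have hI1 : (∫ s in (0:ℝ)..t0, (t1 - s) ^ (α - 1) * mlu α s)
      ≤ ∫ s in (0:ℝ)..t0, (t0 - s) ^ (α - 1) * mlu α s := by
    apply intervalIntegral.integral_mono_on ht0pos.le h1 h0
    intro s hs
    have hu_nn : 0 ≤ mlu α s := by
      rcases hs.2.lt_or_eq with h | h
      · exact (hupos s hs.1 h).le
      · rw [h, hu_t0]
    rcases hs.2.lt_or_eq with h | h
    · have hk : (t1 - s) ^ (α - 1) ≤ (t0 - s) ^ (α - 1) :=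
        Real.rpow_le_rpow_of_nonpos (by linarith) (by linarith) (by linarith)
      exact mul_le_mul_of_nonneg_right hk hu_nn
    · rw [h, hu_t0, mul_zero, mul_zero]
  have hV0' : (∫ s in (0:ℝ)..t0, (t0 - s) ^ (α - 1) * mlu α s) = Real.Gamma α := by
    rw [hV0, hu_t0]; ring
  have hfin : Real.Gamma α * (1 - mlu α t1) ≤ Real.Gamma α := by
    rw [← hV1, ← hsplit]
    rw [hV0'] at hI1
    linarith
  nlinarith [hut1, hGa]

end ML

/-- Two-sided bounds on the forward operator eigenvalues. -/
theorem forward_eigenvalue_bounds (α T R0 Rsup : ℝ) (p : ℕ) (R : ℝ → ℝ)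
    (hα0 : 0 < α) (hα1 : α < 1) (hT : 0 < T) (hp : 1 ≤ p)
    (hRcont : ContinuousOn R (Set.Icc 0 T))
    (hR0 : 0 < R0) (hRinf : ∀ s ∈ Set.Icc 0 T, R0 ≤ R s)
    (hRsup : ∀ s ∈ Set.Icc 0 T, |R s| ≤ Rsup)
    (hEpos : ∀ x : ℝ, 0 ≤ x → 0 ≤ mittagLeffler α α (-x))
    (hEmono : ∀ q : ℕ, 1 ≤ q →
      mittagLeffler α 1 (-(q : ℝ) ^ 2 * T ^ α) ≤ mittagLeffler α 1 (-T ^ α)) :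
    R0 * (1 - mittagLeffler α 1 (-T ^ α)) / (p : ℝ) ^ 2
      ≤ (∫ s in (0 : ℝ)..T,
          (T - s) ^ (α - 1) * mittagLeffler α α (-(p : ℝ) ^ 2 * (T - s) ^ α) * R s) ∧
    (∫ s in (0 : ℝ)..T,
          (T - s) ^ (α - 1) * mittagLeffler α α (-(p : ℝ) ^ 2 * (T - s) ^ α) * R s)
      ≤ Rsup / (p : ℝ) ^ 2 := by
  have hp1 : (1:ℝ) ≤ (p:ℝ) := by exact_mod_cast hp
  have hc : (0:ℝ) < (p:ℝ) ^ 2 := by positivity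
  -- notation
  set c : ℝ := (p:ℝ) ^ 2 with hcdef
  have hmlcont : Continuous (fun s : ℝ => mittagLeffler α α (-c * (T - s) ^ α)) :=
    (ml_continuous hα0 hα1 α hα0).comp
      (continuous_const.mul ((Real.continuous_rpow_const hα0.le).comp
        (continuous_const.sub continuous_id)))
  have hRc : ContinuousOn R (uIcc 0 T) := by rwa [uIcc_of_le hT.le]
  -- kernel nonneg on [0,T]
  have hknn : ∀ s ∈ Icc (0:ℝ) T,
      0 ≤ (T - s) ^ (α - 1) * mittagLeffler α α (-c * (T - s) ^ α) := by
    intro s hs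
    apply mul_nonneg (Real.rpow_nonneg (by linarith [hs.2]) _)
    have h := hEpos (c * (T - s) ^ α)
      (mul_nonneg hc.le (Real.rpow_nonneg (by linarith [hs.2]) _))
    rwa [show -(c * (T - s) ^ α) = -c * (T - s) ^ α from by ring] at h
  -- integral of kernel
  have hrefl : (∫ s in (0:ℝ)..T, (T - s) ^ (α - 1) * mittagLeffler α α (-c * (T - s) ^ α))
      = ∫ v in (0:ℝ)..T, v ^ (α - 1) * mittagLeffler α α (-c * v ^ α) := by
    have h := intervalIntegral.integral_comp_sub_left (a := 0) (b := T)
      (fun v : ℝ => v ^ (α - 1) * mittagLeffler α α (-c * v ^ α)) T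
    simpa using h
  have hK := key1 hα0 hα1 c T hc hT.le
  have hKval : (∫ s in (0:ℝ)..T, (T - s) ^ (α - 1) * mittagLeffler α α (-c * (T - s) ^ α))
      = (1 - mittagLeffler α 1 (-c * T ^ α)) / c := by
    rw [hrefl, eq_div_iff hc.ne']
    linarith [hK]
  -- bounds on Ep
  have hEp_nonneg : 0 ≤ mittagLeffler α 1 (-c * T ^ α) := by
    have h := ml_one_nonneg hα0 hα1 hEpos (c * T ^ α) (by positivity)
    rwa [show -(c * T ^ α) = -c * T ^ α from by ring] at h
  have hEp_le : mittagLeffler α 1 (-c * T ^ α) ≤ mittagLeffler α 1 (-T ^ α) :=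
    hEmono p hp
  have hEp_le1 : 1 - mittagLeffler α 1 (-c * T ^ α) ≤ 1 := by linarith
  -- integrabilities
  have hk_int : IntervalIntegrable
      (fun s : ℝ => (T - s) ^ (α - 1) * mittagLeffler α α (-c * (T - s) ^ α)) volume 0 T :=
    ker_integrable' hα0 hα1 T 0 T hmlcont.continuousOn
  have hkR_int : IntervalIntegrable
      (fun s : ℝ => (T - s) ^ (α - 1) * (mittagLeffler α α (-c * (T - s) ^ α) * R s))
      volume 0 T :=
    ker_integrable' hα0 hα1 T 0 T (hmlcont.continuousOn.mul hRc)
  have hgoal_eq : (∫ s in (0:ℝ)..T,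
        (T - s) ^ (α - 1) * mittagLeffler α α (-c * (T - s) ^ α) * R s)
      = ∫ s in (0:ℝ)..T,
        (T - s) ^ (α - 1) * (mittagLeffler α α (-c * (T - s) ^ α) * R s) := by
    apply intervalIntegral.integral_congr
    intro s _
    ring
  -- lower bound
  have hlow : (∫ s in (0:ℝ)..T,
        (T - s) ^ (α - 1) * mittagLeffler α α (-c * (T - s) ^ α) * R0)
      ≤ ∫ s in (0:ℝ)..T,
        (T - s) ^ (α - 1) * (mittagLeffler α α (-c * (T - s) ^ α) * R s) := by
    apply intervalIntegral.integral_mono_on hT.le (hk_int.mul_const R0) hkR_int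
    intro s hs
    have h := mul_le_mul_of_nonneg_left (hRinf s hs) (hknn s hs)
    calc (T - s) ^ (α - 1) * mittagLeffler α α (-c * (T - s) ^ α) * R0
        = (T - s) ^ (α - 1) * mittagLeffler α α (-c * (T - s) ^ α) * R0 := rfl
      _ ≤ (T - s) ^ (α - 1) * mittagLeffler α α (-c * (T - s) ^ α) * R s := h
      _ = (T - s) ^ (α - 1) * (mittagLeffler α α (-c * (T - s) ^ α) * R s) := by ring
  have hlowval : (∫ s in (0:ℝ)..T,
        (T - s) ^ (α - 1) * mittagLeffler α α (-c * (T - s) ^ α) * R0)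
      = (1 - mittagLeffler α 1 (-c * T ^ α)) / c * R0 := by
    rw [intervalIntegral.integral_mul_const, hKval]
  -- upper bound
  have hRsup0 : 0 ≤ Rsup := by
    have h1 := hRsup 0 ⟨le_refl 0, hT.le⟩
    have h2 := abs_nonneg (R 0)
    linarith
  have hup : (∫ s in (0:ℝ)..T,
        (T - s) ^ (α - 1) * (mittagLeffler α α (-c * (T - s) ^ α) * R s))
      ≤ ∫ s in (0:ℝ)..T,
        (T - s) ^ (α - 1) * mittagLeffler α α (-c * (T - s) ^ α) * Rsup := by
    apply intervalIntegral.integral_mono_on hT.le hkR_int (hk_int.mul_const Rsup)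
    intro s hs
    have hRle : R s ≤ Rsup := le_trans (le_abs_self _) (hRsup s hs)
    have h := mul_le_mul_of_nonneg_left hRle (hknn s hs)
    calc (T - s) ^ (α - 1) * (mittagLeffler α α (-c * (T - s) ^ α) * R s)
        = (T - s) ^ (α - 1) * mittagLeffler α α (-c * (T - s) ^ α) * R s := by ring
      _ ≤ (T - s) ^ (α - 1) * mittagLeffler α α (-c * (T - s) ^ α) * Rsup := h
  have hupval : (∫ s in (0:ℝ)..T,
        (T - s) ^ (α - 1) * mittagLeffler α α (-c * (T - s) ^ α) * Rsup)
      = (1 - mittagLeffler α 1 (-c * T ^ α)) / c * Rsup := by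
    rw [intervalIntegral.integral_mul_const, hKval]
  constructor
  · rw [hgoal_eq]
    have hstep : R0 * (1 - mittagLeffler α 1 (-T ^ α)) / c
        ≤ (1 - mittagLeffler α 1 (-c * T ^ α)) / c * R0 := by
      rw [div_mul_eq_mul_div, div_le_div_iff₀ hc hc]
      have hd : 0 ≤ (mittagLeffler α 1 (-T ^ α) - mittagLeffler α 1 (-c * T ^ α)) * R0 * c :=
        mul_nonneg (mul_nonneg (sub_nonneg.2 hEp_le) hR0.le) hc.le
      nlinarith [hd]
    linarith [hlow, hlowval, hstep]
  · rw [hgoal_eq]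
    have hstep : (1 - mittagLeffler α 1 (-c * T ^ α)) / c * Rsup ≤ Rsup / c := by
      rw [div_mul_eq_mul_div, div_le_div_iff₀ hc hc]
      have hd : 0 ≤ mittagLeffler α 1 (-c * T ^ α) * Rsup * c :=
        mul_nonneg (mul_nonneg hEp_nonneg hRsup0) hc.le
      nlinarith [hd]
    linarith [hup, hupval, hstep]
end

section
/- Let (c_q)_{q≥0} be an absolutely summable real sequence, n ≥ 1, x_k = π(2k−1)/(2n), φ_0(x) = 1/√π and φ_q(x) = √(2/π)cos(qx) for q ≥ 1, and define u(x) = ∑_{q=0}^{∞} c_q φ_q(x). Then for each integer p with 1 ≤ p ≤ n−1: (π/n)∑_{k=1}^{n} u(x_k) φ_p(x_k) = c_p + ∑_{l=1}^{∞} (−1)^l (c_{p+2ln} + c_{2ln−p}). -/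
open Finset Real

lemma telescope (θ : ℝ) (n : ℕ) :
    2 * Real.sin θ * ∑ k ∈ Finset.Icc 1 n, Real.cos ((2 * (k:ℝ) - 1) * θ)
      = Real.sin (2 * n * θ) := by
  induction n with
  | zero => simp
  | succ m ih =>
    rw [Finset.sum_Icc_succ_top (by omega : 1 ≤ m + 1), mul_add, ih]
    have e1 : 2 * ((m:ℝ)+1) * θ = (2*(m:ℝ)+1)*θ + θ := by ring
    have e2 : 2 * (m:ℝ) * θ = (2*(m:ℝ)+1)*θ - θ := by ring
    have e3 : (2 * ((m:ℕ)+1:ℕ) - 1 : ℝ) = 2*(m:ℝ)+1 := by push_cast; ring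
    push_cast
    rw [show ((2:ℝ) * ((m:ℝ)+1) - 1) = 2*(m:ℝ)+1 by ring, e1, e2,
      Real.sin_add, Real.sin_sub]
    ring

lemma cos_sum_eq (m : ℤ) (n : ℕ) (hn : 1 ≤ n) :
    ∑ k ∈ Finset.Icc 1 n, Real.cos ((m:ℝ) * (Real.pi * (2*(k:ℝ)-1) / (2*(n:ℝ))))
      = if (2*(n:ℤ)) ∣ m then (n:ℝ) * (-1:ℝ)^(m / (2*(n:ℤ))) else 0 := by
  have hn0 : (n:ℝ) ≠ 0 := by positivity
  have hπ := Real.pi_ne_zero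
  set θ : ℝ := (m:ℝ) * Real.pi / (2*(n:ℝ)) with hθ
  have harg : ∀ k : ℕ, (m:ℝ) * (Real.pi * (2*(k:ℝ)-1) / (2*(n:ℝ))) = (2*(k:ℝ)-1) * θ := by
    intro k; rw [hθ]; field_simp
  simp_rw [harg]
  by_cases hd : (2*(n:ℤ)) ∣ m
  · obtain ⟨j, hj⟩ := hd
    have hθj : θ = (j:ℝ) * Real.pi := by
      rw [hθ, hj]; push_cast; field_simp
    have hterm : ∀ k ∈ Finset.Icc 1 n,
        Real.cos ((2*(k:ℝ)-1) * θ) = (-1:ℝ)^j := by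
      intro k hk
      have : (2*(k:ℝ)-1) * θ = 0 + ((2*(k:ℤ)-1)*j : ℤ) * Real.pi := by
        rw [hθj]; push_cast; ring
      rw [this, Real.cos_add_int_mul_pi, Real.cos_zero, mul_one]
      rcases Int.even_or_odd j with h | h
      · rw [h.neg_one_zpow, (h.mul_left _).neg_one_zpow]
      · have ho1 : Odd (2*(k:ℤ)-1) := ⟨(k:ℤ)-1, by ring⟩
        have hodd : Odd ((2*(k:ℤ)-1)*j) := ho1.mul h
        rw [h.neg_one_zpow, hodd.neg_one_zpow]
    rw [Finset.sum_congr rfl hterm, Finset.sum_const, Nat.card_Icc]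
    have hq : m / (2*(n:ℤ)) = j := by
      rw [hj]; exact Int.mul_ediv_cancel_left _ (by positivity)
    rw [if_pos ⟨j, hj⟩, hq]
    simp [nsmul_eq_mul]
  · rw [if_neg hd]
    have hs : Real.sin θ ≠ 0 := by
      intro h
      obtain ⟨j, hj⟩ := Real.sin_eq_zero_iff.mp h
      apply hd
      refine ⟨j, ?_⟩
      rw [hθ, eq_div_iff (by positivity : (2:ℝ)*(n:ℝ) ≠ 0)] at hj
      have h4 : ((j:ℝ)*(2*(n:ℝ))) * Real.pi = (m:ℝ) * Real.pi := by
        linear_combination hj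
      have h5 := mul_right_cancel₀ hπ h4
      have : (m:ℝ) = 2*(n:ℝ)*(j:ℝ) := by linarith
      exact_mod_cast this
    have ht := telescope θ n
    have h2nθ : 2 * (n:ℝ) * θ = (m:ℤ) * Real.pi := by rw [hθ]; field_simp
    rw [h2nθ, Real.sin_int_mul_pi] at ht
    have h2s : 2 * Real.sin θ ≠ 0 := by simpa using hs
    exact (mul_eq_zero.mp ht).resolve_left h2s


noncomputable def aliasg2 (c : ℕ → ℝ) (n p : ℕ) (q : ℕ) : ℝ :=
  if p + 2*n ≤ q ∧ 2*n ∣ (q - p) then (-1:ℝ)^((q-p)/(2*n)) * c q else 0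

noncomputable def aliasg3 (c : ℕ → ℝ) (n p : ℕ) (q : ℕ) : ℝ :=
  if 2*n ∣ (q + p) then (-1:ℝ)^((q+p)/(2*n)) * c q else 0

lemma aliasg2_abs_le (c : ℕ → ℝ) (n p q : ℕ) : |aliasg2 c n p q| ≤ |c q| := by
  unfold aliasg2; split
  · rw [abs_mul, abs_pow, abs_neg, abs_one, one_pow, one_mul]
  · simp [abs_nonneg]

lemma aliasg3_abs_le (c : ℕ → ℝ) (n p q : ℕ) : |aliasg3 c n p q| ≤ |c q| := by
  unfold aliasg3; split
  · rw [abs_mul, abs_pow, abs_neg, abs_one, one_pow, one_mul]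
  · simp [abs_nonneg]

lemma summable_aliasg2 (c : ℕ → ℝ) (hc : Summable fun q => |c q|) (n p : ℕ) :
    Summable (aliasg2 c n p) :=
  Summable.of_abs (hc.of_nonneg_of_le (fun _ => abs_nonneg _) (fun q => aliasg2_abs_le c n p q))

lemma summable_aliasg3 (c : ℕ → ℝ) (hc : Summable fun q => |c q|) (n p : ℕ) :
    Summable (aliasg3 c n p) :=
  Summable.of_abs (hc.of_nonneg_of_le (fun _ => abs_nonneg _) (fun q => aliasg3_abs_le c n p q))

lemma inj2 (n p : ℕ) (hn : 1 ≤ n) : Function.Injective (fun l : ℕ => p + 2*(l+1)*n) := by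
  intro a b h
  simp only at h
  have h2 : (a+1)*(2*n) = (b+1)*(2*n) := by ring_nf; ring_nf at h; omega
  have := Nat.eq_of_mul_eq_mul_right (by omega : 0 < 2*n) h2
  omega

lemma inj3 (n p : ℕ) (hn : 1 ≤ n) (hp : p + 1 ≤ n) :
    Function.Injective (fun l : ℕ => 2*(l+1)*n - p) := by
  intro a b h
  simp only at h
  have ha : p < 2*(a+1)*n := by nlinarith
  have hb : p < 2*(b+1)*n := by nlinarith
  have h2 : 2*(a+1)*n = 2*(b+1)*n := by omega
  have h3 : (a+1)*(2*n) = (b+1)*(2*n) := by ring_nf; ring_nf at h2; omega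
  have := Nat.eq_of_mul_eq_mul_right (by omega : 0 < 2*n) h3
  omega

lemma tsum_aliasg2 (c : ℕ → ℝ) (n p : ℕ) (hn : 1 ≤ n) :
    ∑' q, aliasg2 c n p q = ∑' l : ℕ, (-1:ℝ)^(l+1) * c (p + 2*(l+1)*n) := by
  have hsupp : Function.support (aliasg2 c n p) ⊆
      Set.range (fun l : ℕ => p + 2*(l+1)*n) := by
    intro q hq
    have hcond : p + 2*n ≤ q ∧ 2*n ∣ (q - p) := by
      by_contra hcon
      simp [aliasg2, if_neg hcon] at hq
    obtain ⟨hle, t, ht⟩ := hcond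
    have ht1 : 1 ≤ t := by cases t with
      | zero => simp at ht; omega
      | succ t => omega
    refine ⟨t - 1, ?_⟩
    simp only
    have h5 : 2*(t-1+1)*n = 2*n*t := by rw [Nat.sub_add_cancel ht1]; ring
    rw [h5, ← ht]
    exact Nat.add_sub_cancel' (by omega : p ≤ q)
  rw [← (inj2 n p hn).tsum_eq hsupp]
  refine tsum_congr fun l => ?_
  have hsub : p + 2*(l+1)*n - p = (l+1)*(2*n) := by
    rw [Nat.add_sub_cancel_left]; ring
  have hcond : p + 2*n ≤ p + 2*(l+1)*n ∧ 2*n ∣ (p + 2*(l+1)*n - p) := by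
    constructor
    · have : 2*n ≤ 2*(l+1)*n := by nlinarith
      omega
    · exact ⟨l+1, by rw [hsub]; ring⟩
  rw [aliasg2, if_pos hcond, hsub, Nat.mul_div_cancel _ (by omega : 0 < 2*n)]

lemma tsum_aliasg3 (c : ℕ → ℝ) (n p : ℕ) (hn : 1 ≤ n) (hp1 : 1 ≤ p) (hp : p + 1 ≤ n) :
    ∑' q, aliasg3 c n p q = ∑' l : ℕ, (-1:ℝ)^(l+1) * c (2*(l+1)*n - p) := by
  have hsupp : Function.support (aliasg3 c n p) ⊆
      Set.range (fun l : ℕ => 2*(l+1)*n - p) := by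
    intro q hq
    have hcond : 2*n ∣ (q + p) := by
      by_contra hcon
      simp [aliasg3, if_neg hcon] at hq
    obtain ⟨t, ht⟩ := hcond
    have ht1 : 1 ≤ t := by cases t with
      | zero => simp at ht; omega
      | succ t => omega
    refine ⟨t - 1, ?_⟩
    simp only
    have h5 : 2*(t-1+1)*n = 2*n*t := by rw [Nat.sub_add_cancel ht1]; ring
    rw [h5, ← ht, Nat.add_sub_cancel]
  rw [← (inj3 n p hn hp).tsum_eq hsupp]
  refine tsum_congr fun l => ?_
  have hple : p ≤ 2*(l+1)*n := by nlinarith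
  have hadd : 2*(l+1)*n - p + p = (l+1)*(2*n) := by rw [Nat.sub_add_cancel hple]; ring
  have hcond : 2*n ∣ (2*(l+1)*n - p + p) := ⟨l+1, by rw [hadd]; ring⟩
  rw [aliasg3, if_pos hcond, hadd, Nat.mul_div_cancel _ (by omega : 0 < 2*n)]

lemma pointwise (c : ℕ → ℝ) (n p : ℕ) (hn : 1 ≤ n) (hp1 : 1 ≤ p) (hp : p + 1 ≤ n)
    (φ : ℕ → ℝ → ℝ)
    (hφ0 : ∀ x, φ 0 x = 1 / Real.sqrt Real.pi)
    (hφ : ∀ q : ℕ, 1 ≤ q → ∀ x, φ q x = Real.sqrt (2 / Real.pi) * Real.cos (q * x))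
    (q : ℕ) :
    (Real.pi / n) * ∑ k ∈ Finset.Icc 1 n,
        c q * φ q (Real.pi * (2*(k:ℝ)-1) / (2*(n:ℝ))) * φ p (Real.pi * (2*(k:ℝ)-1) / (2*(n:ℝ)))
      = (if q = p then c p else 0) + aliasg2 c n p q + aliasg3 c n p q := by
  have hπ : (0:ℝ) < Real.pi := Real.pi_pos
  have hπ0 : Real.pi ≠ 0 := ne_of_gt hπ
  have hn0 : (n:ℝ) ≠ 0 := by positivity
  have hpn : (p:ℤ) + 1 ≤ (n:ℤ) := by exact_mod_cast hp
  have hpz : (1:ℤ) ≤ (p:ℤ) := by exact_mod_cast hp1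
  have hnz : (1:ℤ) ≤ (n:ℤ) := by exact_mod_cast hn
  have hT := fun m : ℤ => cos_sum_eq m n hn
  have hnd2p : ¬ (2*(n:ℤ)) ∣ 2*(p:ℤ) := by
    intro h
    have h1 : (n:ℤ) ∣ (p:ℤ) := (mul_dvd_mul_iff_left (by norm_num : (2:ℤ) ≠ 0)).mp h
    have := Int.le_of_dvd (by omega) h1
    omega
  have hndp : ¬ (2*(n:ℤ)) ∣ (p:ℤ) := by
    intro h
    have := Int.le_of_dvd (by omega) h
    omega
  rcases Nat.eq_zero_or_pos q with rfl | hq1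
  · -- q = 0
    have hterm : ∀ k ∈ Finset.Icc 1 n,
        c 0 * φ 0 (Real.pi * (2*(k:ℝ)-1) / (2*(n:ℝ))) * φ p (Real.pi * (2*(k:ℝ)-1) / (2*(n:ℝ)))
        = (c 0 * (1/Real.sqrt Real.pi) * Real.sqrt (2/Real.pi)) *
            Real.cos (((p:ℤ):ℝ) * (Real.pi * (2*(k:ℝ)-1) / (2*(n:ℝ)))) := by
      intro k _
      rw [hφ0, hφ p hp1]
      push_cast
      ring
    rw [Finset.sum_congr rfl hterm, ← Finset.mul_sum, hT (p:ℤ), if_neg hndp]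
    have hng3 : ¬ (2*n ∣ (0 + p)) := by
      intro h
      have := Nat.le_of_dvd (by omega) h
      omega
    rw [aliasg2, aliasg3, if_neg hng3, if_neg (by omega : ¬ (0:ℕ) = p),
      if_neg (fun hcon => by omega : ¬ (p + 2*n ≤ 0 ∧ 2*n ∣ (0 - p)))]
    ring
  · -- q ≥ 1
    have hterm : ∀ k ∈ Finset.Icc 1 n,
        c q * φ q (Real.pi * (2*(k:ℝ)-1) / (2*(n:ℝ))) * φ p (Real.pi * (2*(k:ℝ)-1) / (2*(n:ℝ)))
        = (c q * (1/Real.pi)) *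
            (Real.cos (((((q:ℤ)+(p:ℤ) : ℤ)):ℝ) * (Real.pi * (2*(k:ℝ)-1) / (2*(n:ℝ))))
              + Real.cos (((((q:ℤ)-(p:ℤ) : ℤ)):ℝ) * (Real.pi * (2*(k:ℝ)-1) / (2*(n:ℝ))))) := by
      intro k _
      rw [hφ q hq1, hφ p hp1]
      set y : ℝ := Real.pi * (2*(k:ℝ)-1) / (2*(n:ℝ)) with hy
      have e1 : ((((q:ℤ)+(p:ℤ)):ℤ):ℝ) * y = (q:ℝ)*y + (p:ℝ)*y := by push_cast; ring
      have e2 : ((((q:ℤ)-(p:ℤ)):ℤ):ℝ) * y = (q:ℝ)*y - (p:ℝ)*y := by push_cast; ring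
      rw [e1, e2, Real.cos_add, Real.cos_sub]
      have hsq : Real.sqrt (2/Real.pi) * Real.sqrt (2/Real.pi) = 2/Real.pi :=
        Real.mul_self_sqrt (by positivity)
      linear_combination (c q * Real.cos ((q:ℝ)*y) * Real.cos ((p:ℝ)*y)) * hsq
    rw [Finset.sum_congr rfl hterm, ← Finset.mul_sum, Finset.sum_add_distrib,
      hT ((q:ℤ)+(p:ℤ)), hT ((q:ℤ)-(p:ℤ))]
    have cast_add : ((q:ℤ)+(p:ℤ)) = ((q+p : ℕ):ℤ) := by push_cast; ring
    have cast2n : (2*(n:ℤ)) = ((2*n : ℕ):ℤ) := by push_cast; ring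
    have cast_dvd_add : (2*(n:ℤ)) ∣ ((q:ℤ)+(p:ℤ)) ↔ 2*n ∣ (q + p) := by
      rw [cast_add, cast2n, Int.natCast_dvd_natCast]
    have cast_dvd_sub : p ≤ q → ((2*(n:ℤ)) ∣ ((q:ℤ)-(p:ℤ)) ↔ 2*n ∣ (q - p)) := by
      intro hpq
      rw [show ((q:ℤ)-(p:ℤ)) = ((q-p : ℕ):ℤ) by push_cast [hpq]; ring, cast2n,
        Int.natCast_dvd_natCast]
    by_cases h1 : (2*(n:ℤ)) ∣ ((q:ℤ)+(p:ℤ))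
    · have h2 : ¬ (2*(n:ℤ)) ∣ ((q:ℤ)-(p:ℤ)) := by
        intro h
        apply hnd2p
        have hsub := dvd_sub h1 h
        rw [show ((q:ℤ)+(p:ℤ)) - ((q:ℤ)-(p:ℤ)) = 2*(p:ℤ) by ring] at hsub
        exact hsub
      rw [if_pos h1, if_neg h2]
      have hQp : q ≠ p := by
        rintro rfl
        exact hnd2p (by rwa [show (q:ℤ)+(q:ℤ) = 2*(q:ℤ) by ring] at h1)
      have hg2 : aliasg2 c n p q = 0 := by
        rw [aliasg2, if_neg]
        rintro ⟨hle, hdvd⟩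
        exact h2 ((cast_dvd_sub (by omega)).mpr hdvd)
      have hexp : ((q:ℤ)+(p:ℤ)) / (2*(n:ℤ)) = (((q+p)/(2*n) : ℕ) : ℤ) := by
        rw [cast_add, cast2n, ← Int.natCast_div]
      have hg3 : aliasg3 c n p q = (-1:ℝ)^((q+p)/(2*n)) * c q := by
        rw [aliasg3, if_pos (cast_dvd_add.mp h1)]
      rw [if_neg hQp, hg2, hg3, hexp, zpow_natCast]
      field_simp
      ring
    · by_cases h2 : (2*(n:ℤ)) ∣ ((q:ℤ)-(p:ℤ))
      · rw [if_neg h1, if_pos h2]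
        have hg3 : aliasg3 c n p q = 0 := by
          rw [aliasg3, if_neg (fun h => h1 (cast_dvd_add.mpr h))]
        obtain ⟨j, hj⟩ := h2
        have hqz : (1:ℤ) ≤ (q:ℤ) := by exact_mod_cast hq1
        have hj0 : 0 ≤ j := by
          rcases lt_or_ge j 0 with hjneg | h
          · have : 2*(n:ℤ)*j ≤ 2*(n:ℤ)*(-1) :=
              mul_le_mul_of_nonneg_left (by omega) (by positivity)
            omega
          · exact h
        have hdivj : ((q:ℤ)-(p:ℤ)) / (2*(n:ℤ)) = j := by
          rw [hj]; exact Int.mul_ediv_cancel_left _ (by positivity)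
        rcases eq_or_lt_of_le hj0 with hj00 | hj1
        · -- j = 0, q = p
          have hqp : q = p := by
            rw [← hj00, mul_zero] at hj
            omega
          rw [hdivj, ← hj00, if_pos hqp, hg3]
          have hg2 : aliasg2 c n p q = 0 := by
            rw [aliasg2, if_neg]
            rintro ⟨hle, -⟩
            omega
          rw [hg2, hqp]
          field_simp
          ring
        · -- j ≥ 1
          have hj1' : (1:ℤ) ≤ j := hj1
          have hqbig : (p:ℤ) + 2*(n:ℤ) ≤ (q:ℤ) := by
            have : 2*(n:ℤ)*1 ≤ 2*(n:ℤ)*j := mul_le_mul_of_nonneg_left hj1' (by positivity)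
            omega
          have hqbign : p + 2*n ≤ q := by exact_mod_cast hqbig
          have hQp : q ≠ p := by omega
          have hg2 : aliasg2 c n p q = (-1:ℝ)^((q-p)/(2*n)) * c q := by
            rw [aliasg2, if_pos ⟨hqbign, (cast_dvd_sub (by omega)).mp ⟨j, hj⟩⟩]
          have hexp : ((q:ℤ)-(p:ℤ)) / (2*(n:ℤ)) = (((q-p)/(2*n) : ℕ) : ℤ) := by
            rw [show ((q:ℤ)-(p:ℤ)) = ((q-p : ℕ):ℤ) by push_cast [(by omega : p ≤ q)]; ring, cast2n, ← Int.natCast_div]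
          rw [if_neg hQp, hg2, hg3, hexp, zpow_natCast]
          field_simp
          ring
      · rw [if_neg h1, if_neg h2]
        have hQp : q ≠ p := by
          rintro rfl
          exact h2 (by simp)
        have hg2 : aliasg2 c n p q = 0 := by
          rw [aliasg2, if_neg]
          rintro ⟨hle, hdvd⟩
          exact h2 ((cast_dvd_sub (by omega)).mpr hdvd)
        have hg3 : aliasg3 c n p q = 0 := by
          rw [aliasg3, if_neg (fun h => h1 (cast_dvd_add.mpr h))]
        rw [if_neg hQp, hg2, hg3]
        ring


/-- Discrete Fourier coefficient = true coefficient + aliasing series. -/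
theorem discrete_fourier_aliasing (c : ℕ → ℝ) (hc : Summable fun q => |c q|)
    (n p : ℕ) (hn : 1 ≤ n) (hp1 : 1 ≤ p) (hp2 : p ≤ n - 1)
    (φ : ℕ → ℝ → ℝ)
    (hφ0 : ∀ x, φ 0 x = 1 / Real.sqrt Real.pi)
    (hφ : ∀ q : ℕ, 1 ≤ q → ∀ x, φ q x = Real.sqrt (2 / Real.pi) * Real.cos (q * x))
    (u : ℝ → ℝ) (hu : ∀ x, u x = ∑' q : ℕ, c q * φ q x) :
    (Real.pi / n) * ∑ k ∈ Finset.Icc 1 n,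
        u (Real.pi * (2 * (k : ℝ) - 1) / (2 * n)) * φ p (Real.pi * (2 * (k : ℝ) - 1) / (2 * n))
      = c p + ∑' l : ℕ, (-1 : ℝ) ^ (l + 1) * (c (p + 2 * (l + 1) * n) + c (2 * (l + 1) * n - p)) := by
  have hp2' : p + 1 ≤ n := by omega
  have hφbd : ∀ q x', |φ q x'| ≤ max (1 / Real.sqrt Real.pi) (Real.sqrt (2 / Real.pi)) := by
    intro q x'
    rcases Nat.eq_zero_or_pos q with rfl | hq1
    · rw [hφ0, abs_of_nonneg (by positivity)]
      exact le_max_left _ _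
    · rw [hφ q hq1, abs_mul, abs_of_nonneg (Real.sqrt_nonneg _)]
      refine le_trans ?_ (le_max_right _ _)
      calc Real.sqrt (2/Real.pi) * |Real.cos (q * x')|
          ≤ Real.sqrt (2/Real.pi) * 1 :=
            mul_le_mul_of_nonneg_left (Real.abs_cos_le_one _) (Real.sqrt_nonneg _)
        _ = Real.sqrt (2/Real.pi) := mul_one _
  have hsum1 : ∀ y : ℝ, Summable (fun q => c q * φ q y) := by
    intro y
    apply Summable.of_abs
    refine Summable.of_nonneg_of_le (fun q => abs_nonneg _) (fun q => ?_)
      (hc.mul_right (max (1 / Real.sqrt Real.pi) (Real.sqrt (2 / Real.pi))))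
    rw [abs_mul]
    exact mul_le_mul_of_nonneg_left (hφbd q y) (abs_nonneg _)
  have h1 : ∀ k ∈ Finset.Icc 1 n,
      u (Real.pi * (2 * (k:ℝ) - 1) / (2 * (n:ℝ))) * φ p (Real.pi * (2 * (k:ℝ) - 1) / (2 * (n:ℝ)))
      = ∑' q : ℕ, c q * φ q (Real.pi * (2 * (k:ℝ) - 1) / (2 * (n:ℝ)))
          * φ p (Real.pi * (2 * (k:ℝ) - 1) / (2 * (n:ℝ))) := by
    intro k _
    rw [hu]
    exact (tsum_mul_right).symm
  rw [Finset.sum_congr rfl h1, ← Summable.tsum_finsetSum (fun k _ => (hsum1 _).mul_right _), ← tsum_mul_left,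
    tsum_congr (pointwise c n p hn hp1 hp2' φ hφ0 hφ)]
  have hg1s : Summable (fun q => if q = p then c p else 0) := by
    apply summable_of_ne_finset_zero (s := {p})
    intro q hq
    simp only [Finset.mem_singleton] at hq
    simp [hq]
  rw [Summable.tsum_add (hg1s.add (summable_aliasg2 c hc n p)) (summable_aliasg3 c hc n p),
    Summable.tsum_add hg1s (summable_aliasg2 c hc n p), tsum_ite_eq p (fun _ => c p),
    tsum_aliasg2 c n p hn, tsum_aliasg3 c n p hn hp1 hp2']
  have hsA : Summable (fun l : ℕ => (-1:ℝ)^(l+1) * c (p + 2*(l+1)*n)) := by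
    have h := hc.comp_injective (inj2 n p hn)
    apply Summable.of_abs
    simpa [Function.comp_def, abs_mul, abs_pow] using h
  have hsB : Summable (fun l : ℕ => (-1:ℝ)^(l+1) * c (2*(l+1)*n - p)) := by
    have h := hc.comp_injective (inj3 n p hn hp2')
    apply Summable.of_abs
    simpa [Function.comp_def, abs_mul, abs_pow] using h
  have hrhs : ∑' l : ℕ, (-1:ℝ)^(l+1) * (c (p + 2*(l+1)*n) + c (2*(l+1)*n - p))
      = (∑' l : ℕ, (-1:ℝ)^(l+1) * c (p + 2*(l+1)*n))
        + ∑' l : ℕ, (-1:ℝ)^(l+1) * c (2*(l+1)*n - p) := by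
    rw [← Summable.tsum_add hsA hsB]
    exact tsum_congr fun l => by ring
  rw [hrhs]
  ring
end

section
/- Let (c_q)_{q≥0} be an absolutely summable real sequence, n ≥ 1, x_k = π(2k−1)/(2n), and u(x) = c_0/√π + ∑_{q≥1} c_q √(2/π) cos(qx). Then (1/n)∑_{k=1}^{n} u(x_k) = c_0/√π + √(2/π)·∑_{l=1}^{∞} (−1)^l c_{2ln}. -/
open Finset

lemma cos_sum_aux (n : ℕ) (hn : 1 ≤ n) (m : ℕ) :
    ∑ k ∈ Finset.Icc 1 n, Real.cos ((m : ℝ) * (Real.pi * (2 * (k : ℝ) - 1) / (2 * n)))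
      = if 2 * n ∣ m then (n : ℝ) * (-1) ^ (m / (2 * n)) else 0 := by
  have hn0 : (n : ℝ) ≠ 0 := Nat.cast_ne_zero.2 (by omega)
  by_cases hd : 2 * n ∣ m
  · obtain ⟨l, rfl⟩ := hd
    simp only [if_pos (Dvd.intro l rfl)]
    have hq : (2 * n * l) / (2 * n) = l := Nat.mul_div_cancel_left l (by omega)
    rw [hq]
    have hterm : ∀ k ∈ Finset.Icc 1 n,
        Real.cos (((2 * n * l : ℕ) : ℝ) * (Real.pi * (2 * (k : ℝ) - 1) / (2 * n)))
          = (-1) ^ l := by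
      intro k hk
      have harg : ((2 * n * l : ℕ) : ℝ) * (Real.pi * (2 * (k : ℝ) - 1) / (2 * n))
          = ((2 * k * l : ℕ) : ℝ) * Real.pi - (l : ℝ) * Real.pi := by
        push_cast
        field_simp
      rw [harg, Real.cos_nat_mul_pi_sub]
      have h1 : ((-1 : ℝ)) ^ (2 * k * l) = 1 := by
        have : 2 * k * l = 2 * (k * l) := by ring
        rw [this, pow_mul]
        norm_num
      have h2 : Real.cos ((l : ℝ) * Real.pi) = (-1) ^ l := by
        have := Real.cos_nat_mul_pi_sub 0 l
        simpa using this
      rw [h1, h2, one_mul]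
    rw [Finset.sum_congr rfl hterm, Finset.sum_const, Nat.card_Icc]
    simp [nsmul_eq_mul]
  · rw [if_neg hd]
    set θ : ℝ := (m : ℝ) * Real.pi / (2 * n) with hθ
    have hs : Real.sin θ ≠ 0 := by
      intro h
      rw [Real.sin_eq_zero_iff] at h
      obtain ⟨j, hj⟩ := h
      have hπ : Real.pi ≠ 0 := Real.pi_ne_zero
      have hm : (m : ℝ) = (j : ℝ) * (2 * n) := by
        rw [hθ] at hj
        field_simp at hj
        have h' : ((j : ℝ) * (2 * (n : ℝ))) * Real.pi = (m : ℝ) * Real.pi := by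
          linear_combination Real.pi * hj
        exact (mul_right_cancel₀ hπ h').symm
      have hmz : (m : ℤ) = j * (2 * n) := by exact_mod_cast hm
      apply hd
      have : ((2 * n : ℕ) : ℤ) ∣ (m : ℤ) := ⟨j, by push_cast; linarith [hmz]⟩
      exact_mod_cast this
    have key : (2 : ℝ) * Real.sin θ *
        ∑ k ∈ Finset.Icc 1 n, Real.cos ((m : ℝ) * (Real.pi * (2 * (k : ℝ) - 1) / (2 * n)))
          = 0 := by
      rw [Finset.mul_sum]
      have hre : ∀ k ∈ Finset.Icc 1 n,
          (2 : ℝ) * Real.sin θ * Real.cos ((m : ℝ) * (Real.pi * (2 * (k : ℝ) - 1) / (2 * n)))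
            = Real.sin ((k : ℝ) * m * Real.pi / n) - Real.sin (((k : ℝ) - 1) * m * Real.pi / n) := by
        intro k hk
        rw [Real.sin_sub_sin]
        have e1 : ((k : ℝ) * m * Real.pi / n - ((k : ℝ) - 1) * m * Real.pi / n) / 2 = θ := by
          rw [hθ]; field_simp; all_goals ring
        have e2 : ((k : ℝ) * m * Real.pi / n + ((k : ℝ) - 1) * m * Real.pi / n) / 2
            = (m : ℝ) * (Real.pi * (2 * (k : ℝ) - 1) / (2 * n)) := by
          field_simp; all_goals ring
        rw [e1, e2]
      rw [Finset.sum_congr rfl hre]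
      have htel : ∑ k ∈ Finset.Icc 1 n,
          (Real.sin ((k : ℝ) * m * Real.pi / n) - Real.sin (((k : ℝ) - 1) * m * Real.pi / n))
            = Real.sin (((n : ℕ) : ℝ) * m * Real.pi / n)
              - Real.sin (((0 : ℕ) : ℝ) * m * Real.pi / n) := by
        rw [show Finset.Icc 1 n = Finset.image (· + 1) (Finset.range n) by
          ext k
          simp only [Finset.mem_Icc, Finset.mem_image, Finset.mem_range]
          constructor
          · rintro ⟨h1, h2⟩; exact ⟨k - 1, by omega, by omega⟩
          · rintro ⟨a, ha, rfl⟩; omega]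
        rw [Finset.sum_image (by intro a _ b _ h; have h' : a + 1 = b + 1 := h; omega)]
        rw [← Finset.sum_range_sub (fun k : ℕ => Real.sin ((k : ℝ) * m * Real.pi / n)) n]
        apply Finset.sum_congr rfl
        intro i _
        push_cast
        ring_nf
      rw [htel]
      have h2 : ((n : ℕ) : ℝ) * m * Real.pi / n = (m : ℝ) * Real.pi := by field_simp
      rw [h2]
      simp [Real.sin_nat_mul_pi]
    have h2 : Real.sin θ ≠ 0 := hs
    have := mul_eq_zero.mp key
    rcases this with h | h
    · rcases mul_eq_zero.mp h with h' | h'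
      · norm_num at h'
      · exact absurd h' h2
    · exact h

/-- Zeroth-mode aliasing identity: averaging over the midpoint grid. -/
theorem zeroth_mode_aliasing (c : ℕ → ℝ) (hc : Summable fun q => |c q|)
    (n : ℕ) (hn : 1 ≤ n)
    (u : ℝ → ℝ)
    (hu : ∀ x, u x = c 0 / Real.sqrt Real.pi
        + ∑' q : ℕ, c (q + 1) * (Real.sqrt (2 / Real.pi) * Real.cos (((q : ℝ) + 1) * x))) :
    (1 / (n : ℝ)) * ∑ k ∈ Finset.Icc 1 n, u (Real.pi * (2 * (k : ℝ) - 1) / (2 * n))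
      = c 0 / Real.sqrt Real.pi
        + Real.sqrt (2 / Real.pi) * ∑' l : ℕ, (-1 : ℝ) ^ (l + 1) * c (2 * (l + 1) * n) := by
  have hn0 : (n : ℝ) ≠ 0 := Nat.cast_ne_zero.2 (by omega)
  set s : ℝ := Real.sqrt (2 / Real.pi) with hs
  have hs0 : 0 ≤ s := Real.sqrt_nonneg _
  set x : ℕ → ℝ := fun k => Real.pi * (2 * (k : ℝ) - 1) / (2 * n) with hx
  have hcs : Summable fun q => |c (q + 1)| := by
    have := (summable_nat_add_iff 1).2 hc
    simpa using this
  have hsum_k : ∀ k : ℕ, Summable (fun q => c (q + 1) * (s * Real.cos (((q : ℝ) + 1) * x k))) := by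
    intro k
    apply Summable.of_abs
    apply Summable.of_nonneg_of_le (fun q => abs_nonneg _) _ (hcs.mul_right s)
    intro q
    rw [abs_mul]
    have : |s * Real.cos (((q : ℝ) + 1) * x k)| ≤ s := by
      rw [abs_mul, abs_of_nonneg hs0]
      calc s * |Real.cos (((q : ℝ) + 1) * x k)| ≤ s * 1 := by
            exact mul_le_mul_of_nonneg_left (Real.abs_cos_le_one _) hs0
        _ = s := mul_one s
    exact mul_le_mul_of_nonneg_left this (abs_nonneg _)
  -- rewrite u
  have h1 : ∑ k ∈ Finset.Icc 1 n, u (x k)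
      = (n : ℝ) * (c 0 / Real.sqrt Real.pi)
        + ∑ k ∈ Finset.Icc 1 n, ∑' q : ℕ, c (q + 1) * (s * Real.cos (((q : ℝ) + 1) * x k)) := by
    simp only [hu]
    rw [Finset.sum_add_distrib, Finset.sum_const, Nat.card_Icc]
    simp [nsmul_eq_mul]
  -- swap sum and tsum
  have h2 : ∑ k ∈ Finset.Icc 1 n, ∑' q : ℕ, c (q + 1) * (s * Real.cos (((q : ℝ) + 1) * x k))
      = ∑' q : ℕ, ∑ k ∈ Finset.Icc 1 n, c (q + 1) * (s * Real.cos (((q : ℝ) + 1) * x k)) := by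
    exact (Summable.tsum_finsetSum (fun k _ => hsum_k k)).symm
  -- evaluate inner cosine sums
  have h3 : ∀ q : ℕ, ∑ k ∈ Finset.Icc 1 n, c (q + 1) * (s * Real.cos (((q : ℝ) + 1) * x k))
      = c (q + 1) * s *
          (if 2 * n ∣ (q + 1) then (n : ℝ) * (-1) ^ ((q + 1) / (2 * n)) else 0) := by
    intro q
    rw [← cos_sum_aux n hn (q + 1)]
    rw [Finset.mul_sum]
    apply Finset.sum_congr rfl
    intro k _
    have : ((q : ℝ) + 1) * x k = ((q + 1 : ℕ) : ℝ) * (Real.pi * (2 * (k : ℝ) - 1) / (2 * n)) := by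
      push_cast; rw [hx]
    rw [this]; ring
  set G : ℕ → ℝ := fun q =>
    c (q + 1) * s * (if 2 * n ∣ (q + 1) then (n : ℝ) * (-1) ^ ((q + 1) / (2 * n)) else 0) with hG
  set g : ℕ → ℕ := fun l => 2 * (l + 1) * n - 1 with hg
  have hgn : ∀ l : ℕ, g l + 1 = 2 * (l + 1) * n := by
    intro l
    have h1 : 0 < 2 * (l + 1) * n := Nat.mul_pos (by omega) (by omega)
    simp only [hg]
    omega
  have hginj : Function.Injective g := by
    intro a b h
    simp only [hg] at h
    have ha : 0 < 2 * (a + 1) * n := Nat.mul_pos (by omega) (by omega)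
    have hb : 0 < 2 * (b + 1) * n := Nat.mul_pos (by omega) (by omega)
    have h' : 2 * (a + 1) * n = 2 * (b + 1) * n := by omega
    have h'' : 2 * (a + 1) = 2 * (b + 1) :=
      Nat.eq_of_mul_eq_mul_right (by omega) h'
    omega
  have hsupp : Function.support G ⊆ Set.range g := by
    intro q hq
    simp only [Function.mem_support, hG] at hq
    by_cases hd : 2 * n ∣ (q + 1)
    · obtain ⟨j, hj⟩ := hd
      have hj1 : 1 ≤ j := by
        rcases Nat.eq_zero_or_pos j with h | h
        · subst h; simp at hj
        · exact h
      refine ⟨j - 1, ?_⟩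
      have e : 2 * ((j - 1) + 1) * n = 2 * n * j := by
        have : (j - 1) + 1 = j := by omega
        rw [this]; ring
      have := hgn (j - 1)
      omega
    · simp [hd] at hq
  have htsum : ∑' q : ℕ, G q = s * (n : ℝ) * ∑' l : ℕ, (-1 : ℝ) ^ (l + 1) * c (2 * (l + 1) * n) := by
    rw [← hginj.tsum_eq hsupp]
    rw [← tsum_mul_left]
    apply tsum_congr
    intro l
    have hgl := hgn l
    have hd : 2 * n ∣ 2 * (l + 1) * n := ⟨l + 1, by ring⟩
    have hdiv : 2 * (l + 1) * n / (2 * n) = l + 1 := by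
      rw [show 2 * (l + 1) * n = 2 * n * (l + 1) by ring]
      exact Nat.mul_div_cancel_left (l + 1) (by omega)
    simp only [hG, hgl, if_pos hd, hdiv]
    ring
  rw [h1, h2]
  rw [tsum_congr h3]
  rw [htsum]
  field_simp
end
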